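/- A torsion-free group that is virtually infinite cyclic (i.e. contains a finite-index subgroup isomorphic to ℤ) and is nontrivial is isomorphic to ℤ. -/

import Mathlib

/-- The Mathlib (Dec 2024) definition, since removed: a monoid is torsion-free if no
element except `1` has finite order. -/
def Monoid.IsTorsionFree (G : Type*) [Monoid G] : Prop :=
  ∀ g : G, g ≠ 1 → ¬IsOfFinOrder g

/-- An infinite-cyclic-type group: cyclic, nontrivial, torsion-free implies ≃* ℤ. -/
lemma aux_cyclic_tf {X : Type*} [Group X] [IsCyclic X] (htf : Monoid.IsTorsionFree X)
    (hnt : Nontrivial X) : Nonempty (X ≃* Multiplicative ℤ) := by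
  obtain ⟨g, hg⟩ := IsCyclic.exists_generator (α := X)
  have hg1 : g ≠ 1 := by
    rintro rfl
    obtain ⟨x, y, hxy⟩ := hnt
    obtain ⟨k, hk⟩ := Subgroup.mem_zpowers_iff.mp (hg x)
    obtain ⟨l, hl⟩ := Subgroup.mem_zpowers_iff.mp (hg y)
    simp only [one_zpow] at hk hl
    exact hxy (hk ▸ hl ▸ rfl)
  have hfo : ¬IsOfFinOrder g := htf g hg1
  have hinj : Function.Injective fun n : ℤ => g ^ n :=
    injective_zpow_iff_not_isOfFinOrder.mpr hfo
  refine ⟨(MulEquiv.ofBijective (zpowersHom X g) ⟨?_, ?_⟩).symm⟩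
  · intro a b hab
    have : g ^ a.toAdd = g ^ b.toAdd := hab
    exact hinj this
  · intro x
    obtain ⟨k, hk⟩ := Subgroup.mem_zpowers_iff.mp (hg x)
    exact ⟨Multiplicative.ofAdd k, hk⟩

theorem stmt2 {G : Type*} [Group G] (htf : Monoid.IsTorsionFree G) (hnt : Nontrivial G)
    (hvz : ∃ H : Subgroup G, H.index ≠ 0 ∧ Nonempty (H ≃* Multiplicative ℤ)) :
    Nonempty (G ≃* Multiplicative ℤ) := by
  obtain ⟨H, hidx, ⟨e⟩⟩ := hvz
  haveI : H.FiniteIndex := ⟨hidx⟩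
  -- G is infinite
  haveI : Infinite H := Infinite.of_injective _ e.symm.injective
  haveI : Infinite G := Infinite.of_injective (Subtype.val : H → G) Subtype.coe_injective
  -- the normal core N of H
  set N := H.normalCore with hN
  haveI : N.FiniteIndex := H.finiteIndex_normalCore
  have hNle : N ≤ H := H.normalCore_le
  have hNidx : N.index ≠ 0 := Subgroup.FiniteIndex.index_ne_zero
  -- N is cyclic
  haveI : IsCyclic H := isCyclic_of_surjective e.symm e.symm.surjective
  haveI : IsCyclic N :=
    isCyclic_of_surjective (Subgroup.subgroupOfEquivOfLe hNle)
      (Subgroup.subgroupOfEquivOfLe hNle).surjective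
  -- generator z of N
  obtain ⟨⟨z, hzN⟩, hz⟩ := IsCyclic.exists_generator (α := N)
  have hz1 : z ≠ 1 := by
    rintro rfl
    have hbot : N = ⊥ := by
      refine (Subgroup.eq_bot_iff_forall N).mpr fun x hx => ?_
      obtain ⟨k, hk⟩ := Subgroup.mem_zpowers_iff.mp (hz ⟨x, hx⟩)
      have : ((1 : N) ^ k : N) = ⟨x, hx⟩ := by
        convert hk using 2
        rfl
      simpa [Subtype.ext_iff] using this.symm
    rw [hbot, Subgroup.index_bot, Nat.card_eq_zero_of_infinite] at hNidx
    exact hNidx rfl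
  have hzfo : ¬IsOfFinOrder z := htf z hz1
  have hzpinj : Function.Injective fun n : ℤ => z ^ n :=
    injective_zpow_iff_not_isOfFinOrder.mpr hzfo
  -- every element of N is a power of z (in G)
  have hpow : ∀ x ∈ N, ∃ k : ℤ, z ^ k = x := by
    intro x hx
    obtain ⟨k, hk⟩ := Subgroup.mem_zpowers_iff.mp (hz ⟨x, hx⟩)
    exact ⟨k, by simpa [Subtype.ext_iff] using hk⟩
  -- z is central
  have hcen : ∀ g : G, g * z = z * g := by
    intro g
    obtain ⟨m, hm⟩ := hpow (g * z * g⁻¹) (Subgroup.Normal.conj_mem inferInstance z hzN g)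
    obtain ⟨l, hl⟩ := hpow (g⁻¹ * z * g) (by
      have := Subgroup.Normal.conj_mem (inferInstance : N.Normal) z hzN g⁻¹
      simpa using this)
    have hzlm : z ^ (l * m) = z ^ (1 : ℤ) := by
      rw [zpow_one, zpow_mul]
      calc (z ^ l) ^ m = (g⁻¹ * z * g) ^ m := by rw [hl]
        _ = g⁻¹ * z ^ m * g := by
            have := conj_zpow (i := m) (a := g⁻¹) (b := z)
            simpa using this
        _ = g⁻¹ * (g * z * g⁻¹) * g := by rw [hm]
        _ = z := by group
    have hlm : l * m = 1 := hzpinj hzlm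
    have hm1 : m = 1 ∨ m = -1 := by
      have : IsUnit m := IsUnit.of_mul_eq_one l (by linarith)
      exact Int.isUnit_iff.mp this
    rcases hm1 with h1 | h1
    · rw [h1, zpow_one] at hm
      have h2 : g * z * g⁻¹ = z := hm.symm
      calc g * z = (g * z * g⁻¹) * g := by group
        _ = z * g := by rw [h2]
    · -- inversion case: contradiction
      exfalso
      rw [h1] at hm
      have hgn : g ^ N.index ∈ N := N.pow_index_mem g
      obtain ⟨a, ha⟩ := hpow (g ^ N.index) hgn
      have hconj : g * z ^ a * g⁻¹ = z ^ (-a) := by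
        calc g * z ^ a * g⁻¹ = (g * z * g⁻¹) ^ a := (conj_zpow).symm
          _ = (z ^ (-1 : ℤ)) ^ a := by rw [hm]
          _ = z ^ (-a) := by rw [← zpow_mul]; ring_nf
      have hcomm : g * z ^ a * g⁻¹ = z ^ a := by
        rw [ha]
        group
      have haa : a = -a := hzpinj (show z ^ a = z ^ (-a) from hcomm.symm.trans hconj)
      have ha0 : a = 0 := by omega
      have hg1 : g = 1 := by
        by_contra hgne
        refine htf g hgne ?_
        refine isOfFinOrder_iff_pow_eq_one.mpr ⟨N.index, Nat.pos_of_ne_zero hNidx, ?_⟩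
        rw [← ha, ha0, zpow_zero]
      rw [hg1] at hm
      simp only [one_mul, inv_one, mul_one] at hm
      have : z ^ (1 : ℤ) = z ^ (-1 : ℤ) := by simpa using hm.symm
      have := hzpinj this
      omega
  -- N ≤ center G, so center has finite index
  have hNcen : N ≤ Subgroup.center G := by
    intro x hx
    obtain ⟨k, hk⟩ := hpow x hx
    have hzc : z ∈ Subgroup.center G := Subgroup.mem_center_iff.mpr hcen
    exact hk ▸ Subgroup.zpow_mem _ hzc k
  haveI : (Subgroup.center G).FiniteIndex := by
    constructor
    intro h0
    exact hNidx (Nat.eq_zero_of_zero_dvd (h0 ▸ Subgroup.index_dvd_of_le hNcen))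
  -- transfer map is injective, so G is abelian
  set f := MonoidHom.transferCenterPow G with hf
  have hfinj : Function.Injective f := by
    refine (injective_iff_map_eq_one f).mpr fun a ha => ?_
    have : a ^ (Subgroup.center G).index = 1 := by
      have := congrArg Subtype.val ha
      rwa [MonoidHom.transferCenterPow_apply] at this
    by_contra hane
    exact htf a hane (isOfFinOrder_iff_pow_eq_one.mpr
      ⟨(Subgroup.center G).index,
        Nat.pos_of_ne_zero Subgroup.FiniteIndex.index_ne_zero, this⟩)
  have hcomm : ∀ a b : G, a * b = b * a := fun a b =>
    hfinj (show f (a * b) = f (b * a) by rw [map_mul, map_mul]; exact Subtype.ext (Subgroup.mem_center_iff.mp (f b).2 (f a)))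
  -- H is normal, build the power homomorphism into H
  haveI : H.Normal := ⟨fun x hx g => by rw [hcomm g x, mul_assoc, mul_inv_cancel, mul_one]; exact hx⟩
  let p : G →* H :=
    { toFun := fun x => ⟨x ^ H.index, H.pow_index_mem x⟩
      map_one' := by simp
      map_mul' := fun x y => by
        ext
        simp [Commute.mul_pow (hcomm x y)] }
  have hpinj : Function.Injective p := by
    refine (injective_iff_map_eq_one p).mpr fun a ha => ?_
    have ha' : a ^ H.index = 1 := by
      simpa [Subtype.ext_iff, p] using ha
    by_contra hane
    exact htf a hane (isOfFinOrder_iff_pow_eq_one.mpr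
      ⟨H.index, Nat.pos_of_ne_zero hidx, ha'⟩)
  -- G embeds in Multiplicative ℤ, hence is cyclic
  let q : G →* Multiplicative ℤ := e.toMonoidHom.comp p
  have hqinj : Function.Injective q := e.injective.comp hpinj
  haveI : IsCyclic q.range := Subgroup.isCyclic _
  haveI : IsCyclic G :=
    isCyclic_of_surjective (MonoidHom.ofInjective hqinj).symm
      (MonoidHom.ofInjective hqinj).symm.surjective
  exact aux_cyclic_tf htf hnt
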